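/- Let 0 < p < 1, let f(z) = (z−p)^p (z+1−p)^{1−p} with principal branches of the powers (holomorphic on ℂ ∖ (−∞,p]), let w ∈ ℂ with |w| ≥ (1+√5)/2, set F(z) = (f(z)−w)/w, and let H(ζ) = (1−(1−p)ζ)^p (1+pζ)^{1−p} − 1 with principal branches. Suppose z ∈ ℂ ∖ (−∞,p] satisfies |F(z)| ≤ p(1−p)/2. Then |z|² ≥ p(1−p); moreover, if the Newton iterate z̃ = z − F(z)/F′(z) also lies in ℂ ∖ (−∞,p], then F(z̃) = H(F(z)/z) and |F(z̃)| ≤ (2/3)|F(z)|² < p(1−p)/2. -/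

import Mathlib

open Complex Set Metric

noncomputable section

/-- The slit map `f(z) = (z−p)^p (z+1−p)^{1−p}`, with principal branches of the powers. -/
def slitf (p : ℝ) (z : ℂ) : ℂ := (z - (p : ℂ)) ^ (p : ℂ) * (z + 1 - (p : ℂ)) ^ (1 - (p : ℂ))

/-- The slit `(−∞, p]` on the real axis, as a subset of `ℂ`. -/
def slitSet (p : ℝ) : Set ℂ := {z : ℂ | z.im = 0 ∧ z.re ≤ p}

/-- The auxiliary function `H(ζ) = (1 − (1−p)ζ)^p (1 + pζ)^{1−p} − 1` (principal branches). -/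
def Hfun (p : ℝ) (ζ : ℂ) : ℂ :=
  (1 - (1 - (p : ℂ)) * ζ) ^ (p : ℂ) * (1 + (p : ℂ) * ζ) ^ (1 - (p : ℂ)) - 1

namespace NewtonAux

open Real

lemma sqrt5_lb : (2.236 : ℝ) ≤ Real.sqrt 5 := by
  have h : (2.236 : ℝ) = Real.sqrt (2.236^2) := (Real.sqrt_sq (by norm_num)).symm
  rw [h]; exact Real.sqrt_le_sqrt (by norm_num)

lemma sqrt5_ub : Real.sqrt 5 ≤ 2.2361 := by
  have h : (2.2361 : ℝ) = Real.sqrt (2.2361^2) := (Real.sqrt_sq (by norm_num)).symm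
  rw [h]; exact Real.sqrt_le_sqrt (by norm_num)

lemma ne_zero_of_near_one {x : ℂ} {δ : ℝ} (h : ‖x - 1‖ ≤ δ) (hδ : δ < 1) : x ≠ 0 := by
  intro h0
  rw [h0] at h
  simp at h
  linarith

lemma re_ge_of_near_one {x : ℂ} {δ : ℝ} (h : ‖x - 1‖ ≤ δ) : 1 - δ ≤ x.re := by
  have h1 : |(x - 1).re| ≤ δ := le_trans (Complex.abs_re_le_norm _) h
  have h2 : (x - 1).re = x.re - 1 := by simp
  rw [h2] at h1
  have := abs_le.mp h1
  linarith [this.1]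

lemma arg_le_of_near_one {x : ℂ} {δ : ℝ} (h : ‖x - 1‖ ≤ δ) (hδ : δ ≤ 1/4) :
    |Complex.arg x| ≤ 2.1 * δ := by
  have hδ0 : 0 ≤ δ := le_trans (norm_nonneg _) h
  have hre : 1 - δ ≤ x.re := re_ge_of_near_one h
  have hre0 : 0 < x.re := by linarith
  have hx0 : x ≠ 0 := ne_zero_of_near_one h (by linarith)
  have habs : 1 - δ ≤ ‖x‖ :=
    le_trans hre (le_trans (le_abs_self _) (Complex.abs_re_le_norm x))
  have him : |x.im| ≤ δ := by
    have h2 : (x - 1).im = x.im := by simp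
    calc |x.im| = |(x - 1).im| := by rw [h2]
    _ ≤ ‖x - 1‖ := Complex.abs_im_le_norm _
    _ ≤ δ := h
  have hhalf : |Complex.arg x| ≤ π / 2 := Complex.abs_arg_le_pi_div_two_iff.mpr hre0.le
  have hsin : Real.sin |Complex.arg x| = |Real.sin (Complex.arg x)| := by
    rcases le_or_gt 0 (Complex.arg x) with hs | hs
    · rw [_root_.abs_of_nonneg hs, _root_.abs_of_nonneg]
      exact Real.sin_nonneg_of_nonneg_of_le_pi hs
        (le_trans (le_trans (le_abs_self _) hhalf) (by linarith [Real.pi_pos]))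
    · rw [_root_.abs_of_neg hs]
      have h1 : 0 ≤ Real.sin (-Complex.arg x) := by
        apply Real.sin_nonneg_of_nonneg_of_le_pi (by linarith)
        have : -Complex.arg x ≤ |Complex.arg x| := by rw [_root_.abs_of_neg hs]
        linarith [le_trans this hhalf, Real.pi_pos]
      rw [Real.sin_neg] at h1
      rw [_root_.abs_of_nonpos (by linarith), Real.sin_neg]
  have hkey : 2 / π * |Complex.arg x| ≤ Real.sin |Complex.arg x| :=
    Real.mul_le_sin (abs_nonneg _) hhalf
  have hsinval : |Real.sin (Complex.arg x)| ≤ δ / (1 - δ) := by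
    rw [Complex.sin_arg, abs_div, _root_.abs_of_nonneg (norm_nonneg x)]
    apply div_le_div₀ hδ0 him (by linarith) habs
  have hratio : δ / (1 - δ) ≤ (4/3) * δ := by
    rw [div_le_iff₀ (by linarith)]
    nlinarith
  have hπ : π < 3.15 := by linarith [Real.pi_lt_d2]
  have hπ0 := Real.pi_pos
  have h2 : 2 / π * |Complex.arg x| ≤ (4/3) * δ := by
    calc 2 / π * |Complex.arg x| ≤ Real.sin |Complex.arg x| := hkey
    _ = |Real.sin (Complex.arg x)| := hsin
    _ ≤ δ / (1 - δ) := hsinval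
    _ ≤ (4/3) * δ := hratio
  have h3 : |Complex.arg x| ≤ π * (2/3) * δ := by
    have := mul_le_mul_of_nonneg_left h2 (le_of_lt (half_pos hπ0))
    calc |Complex.arg x| = π / 2 * (2 / π * |Complex.arg x|) := by field_simp
    _ ≤ π / 2 * ((4/3) * δ) := this
    _ = π * (2/3) * δ := by ring
  calc |Complex.arg x| ≤ π * (2/3) * δ := h3
  _ ≤ 2.1 * δ := by nlinarith

lemma abs_arg_sub_lt_pi {x y : ℂ} (hx0 : x ≠ 0) (hy0 : y ≠ 0) (him : x.im = y.im)
    (hre : x.im = 0 → 0 < x.re ∧ 0 < y.re) :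
    |Complex.arg x - Complex.arg y| < π := by
  rcases lt_trichotomy x.im 0 with h | h | h
  · have h1 : Complex.arg x < 0 := Complex.arg_neg_iff.mpr h
    have h2 : Complex.arg y < 0 := Complex.arg_neg_iff.mpr (him ▸ h)
    have h3 := Complex.neg_pi_lt_arg x
    have h4 := Complex.neg_pi_lt_arg y
    rw [abs_lt]; constructor <;> linarith
  · have h1 : Complex.arg x = 0 := Complex.arg_eq_zero_iff.mpr ⟨(hre h).1.le, h⟩
    have h2 : Complex.arg y = 0 := Complex.arg_eq_zero_iff.mpr ⟨(hre h).2.le, him ▸ h⟩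
    simp [h1, h2, Real.pi_pos]
  · have h1 : 0 ≤ Complex.arg x := Complex.arg_nonneg_iff.mpr h.le
    have h2 : 0 ≤ Complex.arg y := Complex.arg_nonneg_iff.mpr (him ▸ h.le)
    have h3 : Complex.arg x < π := by
      refine lt_of_le_of_ne (Complex.arg_le_pi x) (fun he => ?_)
      have := (Complex.arg_eq_pi_iff.mp he).2
      exact absurd this (by linarith)
    have h4 : Complex.arg y < π := by
      refine lt_of_le_of_ne (Complex.arg_le_pi y) (fun he => ?_)
      have := (Complex.arg_eq_pi_iff.mp he).2
      rw [← him] at this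
      exact absurd this (by linarith)
    rw [abs_lt]; constructor <;> linarith

lemma split_args {x y : ℂ} (hx0 : x ≠ 0) (hy0 : y ≠ 0) (him : x.im = y.im)
    (hre : x.im = 0 → 0 < x.re ∧ 0 < y.re)
    (h : π - 0.7 < |Complex.arg x - Complex.arg y|) :
    (π - 0.7 ≤ |Complex.arg x| ∧ |Complex.arg y| ≤ 0.7) ∨
      (π - 0.7 ≤ |Complex.arg y| ∧ |Complex.arg x| ≤ 0.7) := by
  have hπ3 := Real.pi_gt_three
  rcases lt_trichotomy x.im 0 with hs | hs | hs
  · have h1 : Complex.arg x < 0 := Complex.arg_neg_iff.mpr hs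
    have h2 : Complex.arg y < 0 := Complex.arg_neg_iff.mpr (him ▸ hs)
    have h3 := Complex.neg_pi_lt_arg x
    have h4 := Complex.neg_pi_lt_arg y
    rw [_root_.abs_of_neg h1, _root_.abs_of_neg h2]
    rcases le_total (Complex.arg x) (Complex.arg y) with hc | hc
    · left
      constructor
      · rw [abs_sub_comm] at h
        rw [_root_.abs_of_nonneg (by linarith)] at h
        linarith
      · rw [abs_sub_comm, _root_.abs_of_nonneg (by linarith)] at h
        linarith
    · right
      constructor
      · rw [_root_.abs_of_nonneg (by linarith)] at h
        linarith
      · rw [_root_.abs_of_nonneg (by linarith)] at h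
        linarith
  · have h1 : Complex.arg x = 0 := Complex.arg_eq_zero_iff.mpr ⟨(hre hs).1.le, hs⟩
    have h2 : Complex.arg y = 0 := Complex.arg_eq_zero_iff.mpr ⟨(hre hs).2.le, him ▸ hs⟩
    rw [h1, h2] at h
    simp at h
    linarith
  · have h1 : 0 ≤ Complex.arg x := Complex.arg_nonneg_iff.mpr hs.le
    have h2 : 0 ≤ Complex.arg y := Complex.arg_nonneg_iff.mpr (him ▸ hs.le)
    have h3 := Complex.arg_le_pi x
    have h4 := Complex.arg_le_pi y
    rw [_root_.abs_of_nonneg h1, _root_.abs_of_nonneg h2]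
    rcases le_total (Complex.arg x) (Complex.arg y) with hc | hc
    · right
      rw [abs_sub_comm, _root_.abs_of_nonneg (by linarith)] at h
      constructor <;> linarith
    · left
      rw [_root_.abs_of_nonneg (by linarith)] at h
      constructor <;> linarith

lemma one_sub_abs_le (y : ℂ) : 1 - ‖y‖ ≤ ‖1 - y‖ := by
  have := norm_sub_norm_le (1 : ℂ) y
  simpa using this

lemma one_sub_abs_le' (y : ℂ) : 1 - ‖y‖ ≤ ‖1 + y‖ := by
  have := norm_sub_norm_le (1 : ℂ) (-y)
  simpa [sub_neg_eq_add] using this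

lemma cos07 : (151/200 : ℝ) ≤ Real.cos 0.7 := by
  have := Real.one_sub_sq_div_two_le_cos (x := 0.7)
  norm_num at this ⊢
  linarith

lemma abs_le_of_args {X Y : ℂ} (hXY : Y = X + 1) (hX0 : X ≠ 0) (hY0 : Y ≠ 0)
    (h1 : π - 0.7 ≤ |Complex.arg X|) (h2 : |Complex.arg Y| ≤ 0.7) :
    ‖X‖ ≤ 4/3 ∧ ‖Y‖ ≤ 4/3 := by
  have hπ3 := Real.pi_gt_three
  have hc7 := cos07
  have hcosX : Real.cos (Complex.arg X) ≤ -(151/200) := by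
    have e1 : Real.cos (Complex.arg X) = Real.cos |Complex.arg X| := (Real.cos_abs _).symm
    have e2 : Real.cos |Complex.arg X| ≤ Real.cos (π - 0.7) :=
      Real.cos_le_cos_of_nonneg_of_le_pi (by linarith) (Complex.abs_arg_le_pi X) h1
    rw [Real.cos_pi_sub] at e2
    rw [e1]
    norm_num at e2 ⊢
    linarith
  have hcosY : (151/200 : ℝ) ≤ Real.cos (Complex.arg Y) := by
    have e1 : Real.cos (Complex.arg Y) = Real.cos |Complex.arg Y| := (Real.cos_abs _).symm
    have e2 : Real.cos 0.7 ≤ Real.cos |Complex.arg Y| :=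
      Real.cos_le_cos_of_nonneg_of_le_pi (abs_nonneg _) (by linarith) h2
    rw [e1]
    norm_num at e2 ⊢
    linarith
  have hreX : X.re = ‖X‖ * Real.cos (Complex.arg X) := by
    rw [Complex.cos_arg hX0]
    field_simp [norm_ne_zero_iff.mpr hX0]
  have hreY : Y.re = ‖Y‖ * Real.cos (Complex.arg Y) := by
    rw [Complex.cos_arg hY0]
    field_simp [norm_ne_zero_iff.mpr hY0]
  have hXpos : 0 < ‖X‖ := norm_pos_iff.mpr hX0
  have hYpos : 0 < ‖Y‖ := norm_pos_iff.mpr hY0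
  have h3 : X.re ≤ -(151/200) * ‖X‖ := by rw [hreX]; nlinarith
  have h4 : (151/200) * ‖Y‖ ≤ Y.re := by rw [hreY]; nlinarith
  have h5 : Y.re = X.re + 1 := by rw [hXY]; simp
  constructor <;> nlinarith

lemma false_of_args {X Y : ℂ} (hXY : Y = X + 1) (hX0 : X ≠ 0) (hY0 : Y ≠ 0)
    (h1 : |Complex.arg X| ≤ 0.7) (h2 : π - 0.7 ≤ |Complex.arg Y|) : False := by
  have hπ3 := Real.pi_gt_three
  have hc7 := cos07
  have hcosX : (151/200 : ℝ) ≤ Real.cos (Complex.arg X) := by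
    have e1 : Real.cos (Complex.arg X) = Real.cos |Complex.arg X| := (Real.cos_abs _).symm
    have e2 : Real.cos 0.7 ≤ Real.cos |Complex.arg X| :=
      Real.cos_le_cos_of_nonneg_of_le_pi (abs_nonneg _) (by linarith) h1
    rw [e1]; norm_num at e2 ⊢; linarith
  have hcosY : Real.cos (Complex.arg Y) ≤ -(151/200) := by
    have e1 : Real.cos (Complex.arg Y) = Real.cos |Complex.arg Y| := (Real.cos_abs _).symm
    have e2 : Real.cos |Complex.arg Y| ≤ Real.cos (π - 0.7) :=
      Real.cos_le_cos_of_nonneg_of_le_pi (by linarith) (Complex.abs_arg_le_pi Y) h2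
    rw [Real.cos_pi_sub] at e2
    rw [e1]; norm_num at e2 ⊢; linarith
  have hreX : X.re = ‖X‖ * Real.cos (Complex.arg X) := by
    rw [Complex.cos_arg hX0]; field_simp [norm_ne_zero_iff.mpr hX0]
  have hreY : Y.re = ‖Y‖ * Real.cos (Complex.arg Y) := by
    rw [Complex.cos_arg hY0]; field_simp [norm_ne_zero_iff.mpr hY0]
  have hXpos : 0 < ‖X‖ := norm_pos_iff.mpr hX0
  have hYpos : 0 < ‖Y‖ := norm_pos_iff.mpr hY0
  have h5 : Y.re = X.re + 1 := by rw [hXY]; simp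
  nlinarith

lemma gbound {p : ℝ} (hp0 : 0 < p) (hp1 : p < 1) {ζ : ℂ} (hζ : ‖ζ‖ ≤ 21/100) :
    ‖(p:ℂ) * Complex.log (1 - (1-(p:ℂ))*ζ) + (1-(p:ℂ)) * Complex.log (1 + (p:ℂ)*ζ)‖
      ≤ p*(1-p) * (‖ζ‖)^2 / (1 - ‖ζ‖)^2 := by
  set T := ‖ζ‖ with hTdef
  have hT0 : 0 ≤ T := norm_nonneg _
  have hT1 : T < 1 := by linarith
  set gfun : ℂ → ℂ := fun s => (p:ℂ) * Complex.log (1 - (1-(p:ℂ))*s) + (1-(p:ℂ)) * Complex.log (1 + (p:ℂ)*s) with hgdef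
  set g' : ℂ → ℂ := fun s => (p:ℂ) * (-(1-(p:ℂ)) / (1 - (1-(p:ℂ))*s)) + (1-(p:ℂ)) * ((p:ℂ) / (1 + (p:ℂ)*s)) with hg'def
  set S : Set ℂ := closedBall (0:ℂ) T with hSdef
  have memS : ∀ s ∈ S, ‖s‖ ≤ T := by
    intro s hs
    simpa [Complex.dist_eq] using (mem_closedBall.mp hs)
  have habs1 : ∀ s ∈ S, ‖(1-(p:ℂ))*s‖ ≤ (1-p) * T := by
    intro s hs
    rw [norm_mul]
    have : ‖1-(p:ℂ)‖ = 1 - p := by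
      rw [show (1:ℂ) - (p:ℂ) = ((1-p : ℝ):ℂ) by push_cast; ring, Complex.norm_real, Real.norm_eq_abs,
        _root_.abs_of_nonneg (by linarith)]
    rw [this]
    exact mul_le_mul_of_nonneg_left (memS s hs) (by linarith)
  have habs2 : ∀ s ∈ S, ‖(p:ℂ)*s‖ ≤ p * T := by
    intro s hs
    rw [norm_mul]
    have : ‖(p:ℂ)‖ = p := by
      rw [Complex.norm_real, Real.norm_eq_abs, _root_.abs_of_nonneg (by linarith)]
    rw [this]
    exact mul_le_mul_of_nonneg_left (memS s hs) (by linarith)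
  have hb1 : ∀ s ∈ S, 1 - T ≤ ‖1 - (1-(p:ℂ))*s‖ := by
    intro s hs
    have h1 : ‖(1-(p:ℂ))*s‖ ≤ T := le_trans (habs1 s hs) (by nlinarith)
    calc (1:ℝ) - T ≤ 1 - ‖(1-(p:ℂ))*s‖ := by linarith
    _ ≤ ‖1 - (1-(p:ℂ))*s‖ := one_sub_abs_le _
  have hb2 : ∀ s ∈ S, 1 - T ≤ ‖1 + (p:ℂ)*s‖ := by
    intro s hs
    have h1 : ‖(p:ℂ)*s‖ ≤ T := le_trans (habs2 s hs) (by nlinarith)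
    calc (1:ℝ) - T ≤ 1 - ‖(p:ℂ)*s‖ := by linarith
    _ ≤ ‖1 + (p:ℂ)*s‖ := one_sub_abs_le' _
  have hmem1 : ∀ s ∈ S, (1 - (1-(p:ℂ))*s) ∈ Complex.slitPlane := by
    intro s hs
    rw [Complex.mem_slitPlane_iff]
    left
    have := re_ge_of_near_one (x := 1 - (1-(p:ℂ))*s) (δ := T) (by
      have : (1:ℂ) - (1-(p:ℂ))*s - 1 = -((1-(p:ℂ))*s) := by ring
      rw [this, norm_neg]
      exact le_trans (habs1 s hs) (by nlinarith))
    linarith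
  have hmem2 : ∀ s ∈ S, (1 + (p:ℂ)*s) ∈ Complex.slitPlane := by
    intro s hs
    rw [Complex.mem_slitPlane_iff]
    left
    have := re_ge_of_near_one (x := 1 + (p:ℂ)*s) (δ := T) (by
      have : (1:ℂ) + (p:ℂ)*s - 1 = (p:ℂ)*s := by ring
      rw [this]
      exact le_trans (habs2 s hs) (by nlinarith))
    linarith
  have hderiv : ∀ s ∈ S, HasDerivWithinAt gfun (g' s) S s := by
    intro s hs
    have d1 : HasDerivAt (fun s : ℂ => 1 - (1-(p:ℂ))*s) (-(1-(p:ℂ))) s := by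
      simpa using (((hasDerivAt_id s).const_mul (1-(p:ℂ))).const_sub 1)
    have d2 : HasDerivAt (fun s : ℂ => 1 + (p:ℂ)*s) ((p:ℂ)) s := by
      simpa using (((hasDerivAt_id s).const_mul ((p:ℂ))).const_add 1)
    have D : HasDerivAt gfun (g' s) s := by
      have l1 := (d1.clog (hmem1 s hs)).const_mul ((p:ℂ))
      have l2 := (d2.clog (hmem2 s hs)).const_mul ((1:ℂ)-(p:ℂ))
      exact l1.add l2
    exact D.hasDerivWithinAt
  have hbound : ∀ s ∈ S, ‖g' s‖ ≤ p*(1-p)*T/(1-T)^2 := by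
    intro s hs
    have hz1 : (1 - (1-(p:ℂ))*s) ≠ 0 := by
      intro h0
      have := hb1 s hs
      rw [h0] at this
      simp at this
      linarith
    have hz2 : (1 + (p:ℂ)*s) ≠ 0 := by
      intro h0
      have := hb2 s hs
      rw [h0] at this
      simp at this
      linarith
    have heq : g' s = -((p:ℂ)*(1-(p:ℂ)))*s / ((1 - (1-(p:ℂ))*s) * (1 + (p:ℂ)*s)) := by
      rw [hg'def]
      field_simp
      ring
    rw [heq]
    rw [show ‖(-((p:ℂ)*(1-(p:ℂ)))*s / ((1 - (1-(p:ℂ))*s) * (1 + (p:ℂ)*s)))‖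
      = ‖-((p:ℂ)*(1-(p:ℂ)))*s / ((1 - (1-(p:ℂ))*s) * (1 + (p:ℂ)*s))‖ from rfl]
    rw [norm_div, norm_mul, norm_mul, norm_neg, norm_mul]
    have hnum : ‖(p:ℂ)‖ * ‖1-(p:ℂ)‖ * ‖s‖ ≤ p*(1-p)*T := by
      have e1 : ‖(p:ℂ)‖ = p := by
        rw [Complex.norm_real, Real.norm_eq_abs, _root_.abs_of_nonneg (by linarith)]
      have e2 : ‖1-(p:ℂ)‖ = 1-p := by
        rw [show (1:ℂ) - (p:ℂ) = ((1-p : ℝ):ℂ) by push_cast; ring, Complex.norm_real, Real.norm_eq_abs,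
          _root_.abs_of_nonneg (by linarith)]
      rw [e1, e2]
      exact mul_le_mul_of_nonneg_left (memS s hs) (by nlinarith)
    have hden : (1-T)^2 ≤ ‖1 - (1-(p:ℂ))*s‖ * ‖1 + (p:ℂ)*s‖ := by
      have := hb1 s hs
      have := hb2 s hs
      nlinarith [norm_nonneg (1 - (1-(p:ℂ))*s), norm_nonneg (1 + (p:ℂ)*s)]
    have hdenpos : (0:ℝ) < (1-T)^2 := by nlinarith
    exact div_le_div₀ (mul_nonneg (mul_nonneg hp0.le (by linarith)) hT0) hnum hdenpos hden
  have hζS : ζ ∈ S := by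
    rw [hSdef, mem_closedBall, Complex.dist_eq]
    simp [hTdef]
  have h0S : (0:ℂ) ∈ S := by
    rw [hSdef, mem_closedBall, Complex.dist_eq]
    simpa using hT0
  have hMVT := (convex_closedBall (0:ℂ) T).norm_image_sub_le_of_norm_hasDerivWithin_le
    hderiv hbound h0S hζS
  have hg0 : gfun 0 = 0 := by
    rw [hgdef]
    simp
  rw [hg0, sub_zero, sub_zero] at hMVT
  have e1 : ‖(p:ℂ) * Complex.log (1 - (1-(p:ℂ))*ζ) + (1-(p:ℂ)) * Complex.log (1 + (p:ℂ)*ζ)‖ = ‖gfun ζ‖ := rfl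
  have e2 : ‖ζ‖ = T := rfl
  rw [e1]
  calc ‖gfun ζ‖ ≤ p*(1-p)*T/(1-T)^2 * ‖ζ‖ := hMVT
  _ = p*(1-p)*T^2/(1-T)^2 := by rw [e2]; ring

end NewtonAux

open Real in
set_option maxHeartbeats 16000000 in
/-- The key step in the proof of Theorem 4.1: if `|w| ≥ (1+√5)/2`,
`F(z) = (f(z)−w)/w`, and `|F(z)| ≤ p(1−p)/2`, then `|z|² ≥ p(1−p)`; moreover, if the Newton
iterate `z̃ = z − F(z)/F′(z)` lies in `ℂ ∖ (−∞,p]`, then `F(z̃) = H(F(z)/z)` and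
`|F(z̃)| ≤ (2/3)|F(z)|² < p(1−p)/2`. -/
theorem newton_one_step (p : ℝ) (hp0 : 0 < p) (hp1 : p < 1) (w : ℂ)
    (habs : (1 + Real.sqrt 5) / 2 ≤ ‖w‖)
    (F : ℂ → ℂ) (hF : F = fun z => (slitf p z - w) / w)
    (z : ℂ) (hz : z ∉ slitSet p) (hFz : ‖F z‖ ≤ p * (1 - p) / 2) :
    p * (1 - p) ≤ ‖z‖ ^ 2 ∧
      (z - F z / deriv F z ∉ slitSet p →
        F (z - F z / deriv F z) = Hfun p (F z / z) ∧
        ‖F (z - F z / deriv F z)‖ ≤ 2 / 3 * ‖F z‖ ^ 2 ∧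
        2 / 3 * ‖F z‖ ^ 2 < p * (1 - p) / 2) := by
  have hq0 : 0 < p * (1 - p) := by nlinarith
  have hq4 : p * (1 - p) ≤ 1/4 := by nlinarith [sq_nonneg (p - 1/2)]
  have hw1 : (1.618 : ℝ) ≤ ‖w‖ := by
    have := NewtonAux.sqrt5_lb
    calc (1.618 : ℝ) = (1 + 2.236)/2 := by norm_num
    _ ≤ (1 + Real.sqrt 5)/2 := by linarith
    _ ≤ ‖w‖ := habs
  have hw0 : w ≠ 0 := by
    intro h
    rw [h] at hw1
    simp at hw1
    linarith
  set t := ‖F z‖ with htdef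
  have ht0 : 0 ≤ t := norm_nonneg _
  have ht8 : t ≤ 1/8 := by linarith
  have hFzw : ‖slitf p z - w‖ = t * ‖w‖ := by
    rw [htdef, hF]
    simp only [norm_div]
    field_simp
  -- slit plane facts
  have hzim : z.im = 0 → p < z.re := by
    intro h
    by_contra hc
    exact hz ⟨h, not_lt.mp hc⟩
  have hA : z - (p:ℂ) ∈ Complex.slitPlane := by
    rw [Complex.mem_slitPlane_iff]
    rcases eq_or_ne z.im 0 with h | h
    · left
      simp only [Complex.sub_re, Complex.ofReal_re]
      linarith [hzim h]
    · right
      simpa using h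
  have hB : z + 1 - (p:ℂ) ∈ Complex.slitPlane := by
    rw [Complex.mem_slitPlane_iff]
    rcases eq_or_ne z.im 0 with h | h
    · left
      simp only [Complex.sub_re, Complex.add_re, Complex.one_re, Complex.ofReal_re]
      linarith [hzim h]
    · right
      simpa using h
  have hA0 : z - (p:ℂ) ≠ 0 := Complex.slitPlane_ne_zero hA
  have hB0 : z + 1 - (p:ℂ) ≠ 0 := Complex.slitPlane_ne_zero hB
  have hf0 : slitf p z ≠ 0 := by
    unfold slitf
    apply mul_ne_zero
    · rw [Ne, Complex.cpow_eq_zero_iff]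
      tauto
    · rw [Ne, Complex.cpow_eq_zero_iff]
      tauto
  have hone_sub : ((1:ℂ) - (p:ℂ)) = ((1 - p : ℝ) : ℂ) := by push_cast; ring
  have habsf : ‖slitf p z‖
      = (‖z - (p:ℂ)‖)^p * (‖z + 1 - (p:ℂ)‖)^(1-p) := by
    unfold slitf
    rw [norm_mul, hone_sub, Complex.norm_cpow_real, Complex.norm_cpow_real]
  have hflow : ‖w‖ * (1 - t) ≤ ‖slitf p z‖ := by
    have h1 : ‖w‖ - ‖slitf p z - w‖ ≤ ‖slitf p z‖ := by
      have h2 := norm_sub_norm_le w (w - slitf p z)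
      simp only [sub_sub_cancel] at h2
      calc ‖w‖ - ‖slitf p z - w‖
          = ‖w‖ - ‖w - slitf p z‖ := by rw [norm_sub_rev]
      _ ≤ ‖slitf p z‖ := h2
      _ = ‖slitf p z‖ := rfl
    rw [hFzw] at h1
    linarith only [h1]
  have hfup : ‖slitf p z‖ ≤ ‖z‖ + p^2 + (1-p)^2 := by
    have h1 : ‖z - (p:ℂ)‖ ≤ ‖z‖ + p := by
      calc ‖z - (p:ℂ)‖ ≤ ‖z‖ + ‖(p:ℂ)‖ := by
            exact norm_sub_le z _
      _ = ‖z‖ + p := by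
            rw [Complex.norm_real, Real.norm_eq_abs, _root_.abs_of_nonneg hp0.le]
    have h2 : ‖z + 1 - (p:ℂ)‖ ≤ ‖z‖ + (1 - p) := by
      have e : z + 1 - (p:ℂ) = z + ((1 - p : ℝ) : ℂ) := by push_cast; ring
      rw [e]
      calc ‖z + ((1-p:ℝ):ℂ)‖ ≤ ‖z‖ + ‖((1-p:ℝ):ℂ)‖ :=
        norm_add_le z _
      _ = ‖z‖ + (1 - p) := by
            rw [Complex.norm_real, Real.norm_eq_abs, _root_.abs_of_nonneg (by linarith)]
    have hAM := Real.geom_mean_le_arith_mean2_weighted hp0.le (by linarith : (0:ℝ) ≤ 1 - p)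
      (norm_nonneg (z - (p:ℂ))) (norm_nonneg (z + 1 - (p:ℂ))) (by ring)
    rw [habsf]
    calc (‖z - (p:ℂ)‖)^p * (‖z + 1 - (p:ℂ)‖)^(1-p)
        ≤ p * ‖z - (p:ℂ)‖ + (1-p) * ‖z + 1 - (p:ℂ)‖ := hAM
    _ ≤ p * (‖z‖ + p) + (1-p) * (‖z‖ + (1-p)) := by
          have s1 := mul_le_mul_of_nonneg_left h1 hp0.le
          have s2 := mul_le_mul_of_nonneg_left h2 (by linarith : (0:ℝ) ≤ 1 - p)
          linarith only [s1, s2]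
    _ = ‖z‖ + p^2 + (1-p)^2 := by ring
  set m := ‖z‖ with hmdef
  have hm0 : 0 ≤ m := norm_nonneg _
  have hwt : ‖w‖ * t ≤ ‖w‖ * (1/8) :=
    mul_le_mul_of_nonneg_left ht8 (norm_nonneg w)
  have hu1 : 1.618 * (1 - t) ≤ ‖w‖ * (1 - t) :=
    mul_le_mul_of_nonneg_right hw1 (by linarith : (0:ℝ) ≤ 1 - t)
  have hMlow : 0.618 + 0.69 * (p*(1-p)) ≤ m - t := by
    linarith only [hflow, hfup, hu1, hFz, ht0]
  have hm6 : 0.618 ≤ m := by linarith only [hMlow, ht0, hq0]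
  have hz0 : z ≠ 0 := by
    rw [← norm_ne_zero_iff, ← hmdef]
    intro h
    rw [h] at hm6
    linarith
  constructor
  · have hmm := mul_le_mul hm6 hm6 (by norm_num) hm0
    linarith only [hmm, hq4]
  intro hztil
  -- derivative computation
  have hd1 : HasDerivAt (fun y : ℂ => (y - (p:ℂ)) ^ (p:ℂ)) ((p:ℂ) * (z - (p:ℂ)) ^ ((p:ℂ) - 1) * 1) z :=
    HasDerivAt.cpow_const ((hasDerivAt_id z).sub_const _) hA
  have hd2 : HasDerivAt (fun y : ℂ => (y + 1 - (p:ℂ)) ^ ((1:ℂ) - (p:ℂ)))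
      (((1:ℂ)-(p:ℂ)) * (z + 1 - (p:ℂ)) ^ (((1:ℂ) - (p:ℂ)) - 1) * 1) z :=
    HasDerivAt.cpow_const (((hasDerivAt_id z).add_const 1).sub_const _) hB
  have hdf : HasDerivAt (slitf p) (slitf p z * z / ((z - (p:ℂ)) * (z + 1 - (p:ℂ)))) z := by
    have h := hd1.mul hd2
    have heq : (p:ℂ) * (z - (p:ℂ)) ^ ((p:ℂ) - 1) * 1 * ((z + 1 - (p:ℂ)) ^ ((1:ℂ) - (p:ℂ)))
        + ((z - (p:ℂ)) ^ (p:ℂ)) * (((1:ℂ)-(p:ℂ)) * (z + 1 - (p:ℂ)) ^ (((1:ℂ) - (p:ℂ)) - 1) * 1)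
        = slitf p z * z / ((z - (p:ℂ)) * (z + 1 - (p:ℂ))) := by
      have hpB : (p:ℂ) * (z + 1 - (p:ℂ)) + (1 - (p:ℂ)) * (z - (p:ℂ)) = z := by push_cast; ring
      have hA' : (z-(p:ℂ))^((p:ℂ)-1) * (z-(p:ℂ)) = (z-(p:ℂ))^(p:ℂ) := by
        nth_rewrite 2 [← Complex.cpow_one (z-(p:ℂ))]
        rw [← Complex.cpow_add _ _ hA0, sub_add_cancel]
      have hB' : (z+1-(p:ℂ))^(((1:ℂ)-(p:ℂ))-1) * (z+1-(p:ℂ)) = (z+1-(p:ℂ))^((1:ℂ)-(p:ℂ)) := by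
        nth_rewrite 2 [← Complex.cpow_one (z+1-(p:ℂ))]
        rw [← Complex.cpow_add _ _ hB0, sub_add_cancel]
      unfold slitf
      rw [eq_div_iff (mul_ne_zero hA0 hB0)]
      linear_combination ((p:ℂ) * (z + 1 - (p:ℂ)) ^ ((1:ℂ)-(p:ℂ)) * (z + 1 - (p:ℂ))) * hA'
        + (((1:ℂ)-(p:ℂ)) * (z - (p:ℂ)) ^ (p:ℂ) * (z - (p:ℂ))) * hB'
        + ((z - (p:ℂ)) ^ (p:ℂ) * (z + 1 - (p:ℂ)) ^ ((1:ℂ)-(p:ℂ))) * hpB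
    rw [heq] at h
    exact h
  have hderivF : deriv F z = slitf p z * z / ((z - (p:ℂ)) * (z + 1 - (p:ℂ))) / w := by
    rw [hF]
    exact ((hdf.sub_const w).div_const w).deriv
  have hFzval : F z = (slitf p z - w)/w := by rw [hF]
  set r := w / slitf p z with hrdef
  set c := 1 - (1-(p:ℂ)) * (F z / z) with hcdef
  set d := 1 + (p:ℂ) * (F z / z) with hddef
  have hAu : (z - F z / deriv F z) - (p:ℂ) = (z - (p:ℂ)) * (r * c) := by
    rw [hderivF, hcdef, hrdef, hFzval]
    field_simp [hw0, hf0, hz0, hA0, hB0]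
    ring
  have hBv : (z - F z / deriv F z) + 1 - (p:ℂ) = (z + 1 - (p:ℂ)) * (r * d) := by
    rw [hderivF, hddef, hrdef, hFzval]
    field_simp [hw0, hf0, hz0, hA0, hB0]
    ring
  set T := ‖F z / z‖ with hTdef
  have hT0 : 0 ≤ T := norm_nonneg _
  have hTm : T = t / m := by rw [hTdef, norm_div, ← htdef, ← hmdef]
  have hT21 : T ≤ 21/100 := by
    rw [hTm, div_le_iff₀ (by linarith : (0:ℝ) < m)]
    linarith only [ht8, hm6]
  have habsp : ‖(p:ℂ)‖ = p := by
    rw [Complex.norm_real, Real.norm_eq_abs, _root_.abs_of_nonneg hp0.le]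
  have habs1p : ‖1-(p:ℂ)‖ = 1 - p := by
    rw [hone_sub, Complex.norm_real, Real.norm_eq_abs, _root_.abs_of_nonneg (by linarith)]
  have hc1 : ‖c - 1‖ ≤ (1-p) * T := by
    have e : c - 1 = -((1-(p:ℂ)) * (F z / z)) := by rw [hcdef]; ring
    rw [e, norm_neg, norm_mul, habs1p, ← hTdef]
  have hd1' : ‖d - 1‖ ≤ p * T := by
    have e : d - 1 = (p:ℂ) * (F z / z) := by rw [hddef]; ring
    rw [e, norm_mul, habsp, ← hTdef]
  have hpT : 0 ≤ p*T := mul_nonneg hp0.le hT0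
  have hpT2 : p*T ≤ T := by
    have := mul_le_mul_of_nonneg_right hp1.le hT0
    linarith only [this]
  have hc0 : c ≠ 0 := NewtonAux.ne_zero_of_near_one hc1 (by linarith)
  have hd0 : d ≠ 0 := NewtonAux.ne_zero_of_near_one hd1' (by linarith)
  have hr1 : ‖r - 1‖ ≤ 1/7 := by
    have e : r - 1 = (w - slitf p z) / slitf p z := by rw [hrdef]; field_simp
    rw [e, norm_div]
    have e2 : ‖w - slitf p z‖ = t * ‖w‖ := by
      rw [← hFzw, norm_sub_rev]
    rw [e2]
    have hfpos : (0:ℝ) < ‖slitf p z‖ := by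
      linarith only [hflow, hwt, hw1]
    rw [div_le_iff₀ hfpos]
    linarith only [hflow, hwt, hw1]
  have hr0 : r ≠ 0 := NewtonAux.ne_zero_of_near_one hr1 (by norm_num)
  have hargc : |Complex.arg c| ≤ 2.1 * ((1-p)*T) :=
    NewtonAux.arg_le_of_near_one hc1 (by linarith)
  have hargd : |Complex.arg d| ≤ 2.1 * (p*T) :=
    NewtonAux.arg_le_of_near_one hd1' (by linarith)
  have hargr : |Complex.arg r| ≤ 2.1 * (1/7) :=
    NewtonAux.arg_le_of_near_one hr1 (by norm_num)
  have hargcd : |Complex.arg c| + |Complex.arg d| ≤ 0.45 := by linarith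
  have hπ3 := Real.pi_gt_three
  have hlogu : Complex.log (r * c) = Complex.log r + Complex.log c := by
    apply Complex.log_mul hr0 hc0
    have h1 := abs_le.mp hargr
    have h2 := abs_le.mp hargc
    constructor
    · linarith
    · linarith
  have hlogv : Complex.log (r * d) = Complex.log r + Complex.log d := by
    apply Complex.log_mul hr0 hd0
    have h1 := abs_le.mp hargr
    have h2 := abs_le.mp hargd
    constructor
    · linarith
    · linarith
  have hargu : Complex.arg (r*c) = Complex.arg r + Complex.arg c := by
    have h := congrArg Complex.im hlogu
    simpa [Complex.log_im] using h
  have hargv : Complex.arg (r*d) = Complex.arg r + Complex.arg d := by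
    have h := congrArg Complex.im hlogv
    simpa [Complex.log_im] using h
  have hu0 : r * c ≠ 0 := mul_ne_zero hr0 hc0
  have hv0 : r * d ≠ 0 := mul_ne_zero hr0 hd0
  obtain ⟨n₁, hn₁⟩ : ∃ n : ℤ, Complex.log ((z - (p:ℂ)) * (r * c))
      - (Complex.log (z - (p:ℂ)) + Complex.log (r * c)) = (n:ℂ) * (2*(π:ℂ)*I) := by
    rw [← Complex.exp_eq_one_iff, Complex.exp_sub, Complex.exp_add, Complex.exp_log hA0,
      Complex.exp_log hu0, Complex.exp_log (mul_ne_zero hA0 hu0)]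
    exact div_self (mul_ne_zero hA0 hu0)
  obtain ⟨n₂, hn₂⟩ : ∃ n : ℤ, Complex.log ((z + 1 - (p:ℂ)) * (r * d))
      - (Complex.log (z + 1 - (p:ℂ)) + Complex.log (r * d)) = (n:ℂ) * (2*(π:ℂ)*I) := by
    rw [← Complex.exp_eq_one_iff, Complex.exp_sub, Complex.exp_add, Complex.exp_log hB0,
      Complex.exp_log hv0, Complex.exp_log (mul_ne_zero hB0 hv0)]
    exact div_self (mul_ne_zero hB0 hv0)
  have him1 : Complex.arg ((z - (p:ℂ)) * (r * c))
      - (Complex.arg (z - (p:ℂ)) + Complex.arg (r * c)) = (n₁:ℝ) * (2*π) := by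
    have h := congrArg Complex.im hn₁
    simpa [Complex.log_im, Complex.mul_im, Complex.mul_re] using h
  have him2 : Complex.arg ((z + 1 - (p:ℂ)) * (r * d))
      - (Complex.arg (z + 1 - (p:ℂ)) + Complex.arg (r * d)) = (n₂:ℝ) * (2*π) := by
    have h := congrArg Complex.im hn₂
    simpa [Complex.log_im, Complex.mul_im, Complex.mul_re] using h
  have hABim : (z - (p:ℂ)).im = (z + 1 - (p:ℂ)).im := by simp
  have hslitAB : (z - (p:ℂ)).im = 0 → 0 < (z - (p:ℂ)).re ∧ 0 < (z + 1 - (p:ℂ)).re := by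
    intro h
    have hz' : z.im = 0 := by simpa using h
    have := hzim hz'
    constructor
    · simp only [Complex.sub_re, Complex.ofReal_re]
      linarith
    · simp only [Complex.sub_re, Complex.add_re, Complex.one_re, Complex.ofReal_re]
      linarith
  have hD1 : |Complex.arg (z - (p:ℂ)) - Complex.arg (z + 1 - (p:ℂ))| < π :=
    NewtonAux.abs_arg_sub_lt_pi hA0 hB0 hABim hslitAB
  have hD2 : |Complex.arg ((z - (p:ℂ)) * (r * c)) - Complex.arg ((z + 1 - (p:ℂ)) * (r * d))| < π := by
    apply NewtonAux.abs_arg_sub_lt_pi (mul_ne_zero hA0 hu0) (mul_ne_zero hB0 hv0)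
    · rw [← hAu, ← hBv]
      simp
    · intro h
      rw [← hAu] at h
      have hz' : (z - F z / deriv F z).im = 0 := by simpa using h
      have hre' : p < (z - F z / deriv F z).re := by
        by_contra hc'
        exact hztil ⟨hz', not_lt.mp hc'⟩
      simp only [Complex.sub_re, Complex.ofReal_re] at hre'
      constructor
      · rw [← hAu]
        simp only [Complex.sub_re, Complex.ofReal_re]
        linarith
      · rw [← hBv]
        simp only [Complex.sub_re, Complex.add_re, Complex.one_re, Complex.ofReal_re]
        linarith
  have hn12 : n₁ = n₂ := by
    rcases le_or_gt |Complex.arg (z - (p:ℂ)) - Complex.arg (z + 1 - (p:ℂ))| (π - 0.7) with hcase | hcase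
    · rw [hargu] at him1
      rw [hargv] at him2
      have key : ((n₁ - n₂ : ℤ) : ℝ) * (2*π)
          = (Complex.arg ((z-(p:ℂ))*(r*c)) - Complex.arg ((z+1-(p:ℂ))*(r*d)))
            - (Complex.arg (z-(p:ℂ)) - Complex.arg (z+1-(p:ℂ)))
            - (Complex.arg c - Complex.arg d) := by
        push_cast
        linarith [him1, him2]
      have habs2 : |((n₁ - n₂ : ℤ) : ℝ)| * (2*π) < 2*π := by
        have e1 : |((n₁ - n₂ : ℤ) : ℝ)| * (2*π) = |((n₁ - n₂ : ℤ) : ℝ) * (2*π)| := by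
          rw [abs_mul, _root_.abs_of_pos (by linarith : (0:ℝ) < 2*π)]
        rw [e1, key]
        have b1 := abs_le.mp hargc
        have b2 := abs_le.mp hargd
        have b3 := abs_lt.mp hD1
        have b4 := abs_lt.mp hD2
        rw [abs_lt]
        have hc1' := abs_le.mp hcase
        constructor <;> linarith
      have hlt1 : |((n₁ - n₂ : ℤ) : ℝ)| < 1 := by
        nlinarith [Real.pi_pos, abs_nonneg (((n₁ - n₂ : ℤ) : ℝ))]
      have hlt2 : |n₁ - n₂| < 1 := by
        rw [← Int.cast_abs] at hlt1
        exact_mod_cast hlt1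
      have := abs_lt.mp hlt2
      omega
    · exfalso
      have hsplit := NewtonAux.split_args hA0 hB0 hABim hslitAB hcase
      have hYX : z + 1 - (p:ℂ) = (z - (p:ℂ)) + 1 := by ring
      rcases hsplit with ⟨hbig, hsmall⟩ | ⟨hbig, hsmall⟩
      · obtain ⟨hXle, hYle⟩ := NewtonAux.abs_le_of_args hYX hA0 hB0 hbig hsmall
        have h43 : ‖slitf p z‖ ≤ 4/3 := by
          rw [habsf]
          calc (‖z - (p:ℂ)‖)^p * (‖z + 1 - (p:ℂ)‖)^(1-p)
              ≤ (4/3 : ℝ)^p * (4/3 : ℝ)^(1-p) := by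
                apply mul_le_mul
                · exact Real.rpow_le_rpow (norm_nonneg _) hXle hp0.le
                · exact Real.rpow_le_rpow (norm_nonneg _) hYle (by linarith)
                · positivity
                · positivity
          _ = (4/3 : ℝ)^(p + (1-p)) := (Real.rpow_add (by norm_num) _ _).symm
          _ = 4/3 := by norm_num
        linarith only [h43, hflow, hwt, hw1]
      · exact NewtonAux.false_of_args hYX hA0 hB0 hsmall hbig
  have hsplitid : slitf p (z - F z / deriv F z) = w * (c ^ (p:ℂ) * d ^ ((1:ℂ)-(p:ℂ))) := by
    have e1 : slitf p (z - F z / deriv F z)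
        = ((z - (p:ℂ)) * (r*c)) ^ (p:ℂ) * ((z + 1 - (p:ℂ)) * (r*d)) ^ ((1:ℂ) - (p:ℂ)) := by
      unfold slitf
      rw [hAu, hBv]
    have hlogAu : Complex.log ((z - (p:ℂ)) * (r * c))
        = Complex.log (z - (p:ℂ)) + Complex.log (r * c) + (n₁:ℂ)*(2*(π:ℂ)*I) := by
      linear_combination hn₁
    have hlogBv : Complex.log ((z + 1 - (p:ℂ)) * (r * d))
        = Complex.log (z + 1 - (p:ℂ)) + Complex.log (r * d) + (n₂:ℂ)*(2*(π:ℂ)*I) := by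
      linear_combination hn₂
    have e2 : ((z - (p:ℂ)) * (r*c)) ^ (p:ℂ)
        = (z - (p:ℂ)) ^ (p:ℂ) * (r*c) ^ (p:ℂ) * Complex.exp ((n₁:ℂ)*(2*(π:ℂ)*I)*(p:ℂ)) := by
      rw [Complex.cpow_def_of_ne_zero (mul_ne_zero hA0 hu0), hlogAu, add_mul, add_mul,
        Complex.exp_add, Complex.exp_add, ← Complex.cpow_def_of_ne_zero hA0,
        ← Complex.cpow_def_of_ne_zero hu0]
    have e3 : ((z + 1 - (p:ℂ)) * (r*d)) ^ ((1:ℂ)-(p:ℂ))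
        = (z + 1 - (p:ℂ)) ^ ((1:ℂ)-(p:ℂ)) * (r*d) ^ ((1:ℂ)-(p:ℂ))
          * Complex.exp ((n₂:ℂ)*(2*(π:ℂ)*I)*((1:ℂ)-(p:ℂ))) := by
      rw [Complex.cpow_def_of_ne_zero (mul_ne_zero hB0 hv0), hlogBv, add_mul, add_mul,
        Complex.exp_add, Complex.exp_add, ← Complex.cpow_def_of_ne_zero hB0,
        ← Complex.cpow_def_of_ne_zero hv0]
    have e4 : (r*c) ^ (p:ℂ) = r ^ (p:ℂ) * c ^ (p:ℂ) := by
      rw [Complex.cpow_def_of_ne_zero hu0, hlogu, add_mul, Complex.exp_add,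
        ← Complex.cpow_def_of_ne_zero hr0, ← Complex.cpow_def_of_ne_zero hc0]
    have e5 : (r*d) ^ ((1:ℂ)-(p:ℂ)) = r ^ ((1:ℂ)-(p:ℂ)) * d ^ ((1:ℂ)-(p:ℂ)) := by
      rw [Complex.cpow_def_of_ne_zero hv0, hlogv, add_mul, Complex.exp_add,
        ← Complex.cpow_def_of_ne_zero hr0, ← Complex.cpow_def_of_ne_zero hd0]
    have hexp1 : Complex.exp ((n₂:ℂ)*(2*(π:ℂ)*I)*(p:ℂ))
        * Complex.exp ((n₂:ℂ)*(2*(π:ℂ)*I)*((1:ℂ)-(p:ℂ))) = 1 := by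
      rw [← Complex.exp_add, show (n₂:ℂ)*(2*(π:ℂ)*I)*(p:ℂ) + (n₂:ℂ)*(2*(π:ℂ)*I)*((1:ℂ)-(p:ℂ))
        = (n₂:ℂ)*(2*(π:ℂ)*I) by ring]
      exact Complex.exp_int_mul_two_pi_mul_I n₂
    have hfr : (z - (p:ℂ)) ^ (p:ℂ) * (z + 1 - (p:ℂ)) ^ ((1:ℂ)-(p:ℂ))
        * (r ^ (p:ℂ) * r ^ ((1:ℂ)-(p:ℂ))) = w := by
      rw [← Complex.cpow_add _ _ hr0, show (p:ℂ) + ((1:ℂ)-(p:ℂ)) = 1 by ring, Complex.cpow_one,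
        hrdef]
      have hslit : (z - (p:ℂ)) ^ (p:ℂ) * (z + 1 - (p:ℂ)) ^ ((1:ℂ)-(p:ℂ)) = slitf p z := rfl
      rw [hslit]
      field_simp
    rw [e1, e2, e3, hn12, e4, e5]
    linear_combination (c ^ (p:ℂ) * d ^ ((1:ℂ)-(p:ℂ)))
        * ((z - (p:ℂ)) ^ (p:ℂ) * (z + 1 - (p:ℂ)) ^ ((1:ℂ)-(p:ℂ)) * (r ^ (p:ℂ) * r ^ ((1:ℂ)-(p:ℂ)))) * hexp1
      + (c ^ (p:ℂ) * d ^ ((1:ℂ)-(p:ℂ))) * hfr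
  have hHrfl : Hfun p (F z / z) = c ^ (p:ℂ) * d ^ ((1:ℂ)-(p:ℂ)) - 1 := by
    unfold Hfun
    rw [hcdef, hddef]
  have hFval : ∀ y : ℂ, F y = (slitf p y - w)/w := fun y => by rw [hF]
  have hFnew : F (z - F z / deriv F z) = Hfun p (F z / z) := by
    rw [hFval (z - F z / deriv F z), hsplitid, hHrfl]
    field_simp
  refine ⟨hFnew, ?_, ?_⟩
  · -- the bound
    have hgb := NewtonAux.gbound hp0 hp1 (ζ := F z / z) hT21
    rw [← hTdef] at hgb
    rw [← hcdef, ← hddef] at hgb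
    have hHexp : Hfun p (F z / z) = Complex.exp ((p:ℂ) * Complex.log c + (1-(p:ℂ)) * Complex.log d) - 1 := by
      rw [hHrfl, Complex.cpow_def_of_ne_zero hc0, Complex.cpow_def_of_ne_zero hd0,
        ← Complex.exp_add]
      congr 1
      ring
    clear hd1 hd2 hdf hderivF hAu hBv him1 him2 hD1 hD2 hlogu hlogv hargu hargv hsplitid
      hFzw hflow hfup hABim hslitAB hzim hargc hargd hargr hargcd hc1 hd1' hr1 hFzval hFval
    have h79 : (79:ℝ)/100 ≤ 1 - T := by linarith
    have h79sq : (0:ℝ) < (1-T)^2 := by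
      have := mul_le_mul h79 h79 (by norm_num) (by linarith only [h79])
      linarith only [this]
    set G := p*(1-p) * T^2 / (1-T)^2 with hGdef
    have hG1 : G ≤ 1/50 := by
      rw [hGdef, div_le_iff₀ h79sq]
      have hTT : T*T ≤ (21/100)*(21/100) := mul_le_mul hT21 hT21 hT0 (by norm_num)
      have hqTT : p*(1-p)*(T*T) ≤ 1/4*((21/100)*(21/100)) :=
        mul_le_mul hq4 hTT (mul_nonneg hT0 hT0) (by norm_num)
      have h79m := mul_le_mul h79 h79 (by norm_num) (by linarith only [h79])
      linarith only [hqTT, h79m]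
    have hG0 : 0 ≤ G := by
      rw [hGdef]
      exact div_nonneg (mul_nonneg hq0.le (sq_nonneg T)) (sq_nonneg _)
    have hHb : ‖Hfun p (F z / z)‖ ≤ G + G^2 := by
      rw [hHexp]
      have h1 : ‖(p:ℂ) * Complex.log c + (1-(p:ℂ)) * Complex.log d‖ ≤ G := hgb
      have h2 := Complex.norm_exp_sub_one_sub_id_le
        (x := (p:ℂ) * Complex.log c + (1-(p:ℂ)) * Complex.log d) (by linarith)
      set g := (p:ℂ) * Complex.log c + (1-(p:ℂ)) * Complex.log d
      calc ‖Complex.exp g - 1‖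
          = ‖(Complex.exp g - 1 - g) + g‖ := by ring_nf
      _ ≤ ‖Complex.exp g - 1 - g‖ + ‖g‖ := norm_add_le _ _
      _ ≤ (‖g‖)^2 + G := by linarith
      _ ≤ G^2 + G := by
          have h3 := pow_le_pow_left₀ (norm_nonneg g) h1 2
          linarith
      _ = G + G^2 := by ring
    have hMpos : (0:ℝ) < m - t := by linarith only [hMlow, hq0]
    have hGeq : G = p*(1-p)*t^2/(m-t)^2 := by
      rw [hGdef, hTm]
      field_simp
    have hkey : p*(1-p)*(m-t)^2 + (p*(1-p))^2*t^2 ≤ 2/3*(m-t)^4 := by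
      have w618 : (0.618:ℝ) ≤ m - t := by linarith only [hMlow, hq0]
      have hM2 : (0.38:ℝ) ≤ (m-t)^2 := by
        have := mul_le_mul w618 w618 (by norm_num) (by linarith only [w618])
        linarith only [this]
      have hqM : p*(1-p) ≤ 1/2*(m-t)^2 := by
        have hnn : (0:ℝ) ≤ 0.618 + 0.69*(p*(1-p)) := by linarith only [hq0]
        have hsq := mul_le_mul hMlow hMlow hnn (by linarith only [hMlow, hnn])
        nlinarith [hsq, hq4, hq0, sq_nonneg (p*(1-p))]
      have h1 : p*(1-p)*(m-t)^2 ≤ 1/2*(m-t)^2*(m-t)^2 :=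
        mul_le_mul_of_nonneg_right hqM (sq_nonneg _)
      have hqt : p*(1-p)*t ≤ 1/32 := by
        have := mul_le_mul hq4 ht8 ht0 (by norm_num)
        linarith only [this]
      have h2 : (p*(1-p))^2*t^2 ≤ 1/1024 := by
        have := mul_le_mul hqt hqt (mul_nonneg hq0.le ht0) (by norm_num)
        nlinarith [this]
      have h3 : (0.38:ℝ)*0.38 ≤ (m-t)^2*(m-t)^2 :=
        mul_le_mul hM2 hM2 (by norm_num) (sq_nonneg _)
      linarith only [h1, h2, h3]
    have hfinal : G + G^2 ≤ 2/3 * t^2 := by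
      rw [hGeq]
      have hcomb : p*(1-p)*t^2/(m-t)^2 + (p*(1-p)*t^2/(m-t)^2)^2
          = (p*(1-p)*(m-t)^2 + (p*(1-p))^2*t^2) * t^2 / (m-t)^4 := by
        field_simp
      rw [hcomb, div_le_iff₀ (by positivity)]
      have := mul_le_mul_of_nonneg_right hkey (sq_nonneg t)
      linarith only [this]
    rw [hFnew]
    calc ‖Hfun p (F z / z)‖ ≤ G + G^2 := hHb
    _ ≤ 2/3 * t^2 := hfinal
  · have a1 := mul_le_mul_of_nonneg_right hFz ht0
    have a2 := mul_le_mul_of_nonneg_left hFz (by linarith only [hq0] : (0:ℝ) ≤ p*(1-p)/2)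
    have a3 := mul_le_mul_of_nonneg_right hq4 hq0.le
    linarith only [a1, a2, a3, hq0]

end
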